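/- For every natural number n ≥ 3, the broadcast domination number of the sunlet graph S_n equals ⌈(n+1)/2⌉. -/

import Mathlib

open SimpleGraph Finset

/-- A dominating broadcast on `G`: every vertex is within distance `f u` of some
vertex `u` with `f u ≥ 1` (distances are measured by the graph metric `G.dist`). -/
def IsDominatingBroadcast {V : Type*} (G : SimpleGraph V) (f : V → ℕ) : Prop :=
  ∀ v : V, ∃ u : V, 1 ≤ f u ∧ G.dist u v ≤ f u

/-- The broadcast domination number of `G`: the minimum cost (sum of strengths)
of a dominating broadcast on `G`. -/
noncomputable def gammaB (V : Type*) [Fintype V] (G : SimpleGraph V) : ℕ :=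
  sInf {c : ℕ | ∃ f : V → ℕ, IsDominatingBroadcast G f ∧ ∑ v, f v = c}

/-- The sunlet graph `S_n`: the cycle `C_n` together with one pendant vertex
attached to each cycle vertex.  The vertex `(i, false)` is the `i`-th cycle
vertex and `(i, true)` is the pendant vertex attached to it. -/
def sunlet (n : ℕ) : SimpleGraph (Fin n × Bool) :=
  SimpleGraph.fromRel (fun a b =>
    (a.2 = false ∧ b.2 = false ∧ (SimpleGraph.cycleGraph n).Adj a.1 b.1) ∨
    (a.1 = b.1 ∧ a.2 = false ∧ b.2 = true))

namespace SunletAux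

variable (n : ℕ) [NeZero n]

open Fin.NatCast Fin.CommRing

/-- Cyclic distance on `Fin n`. -/
def cd (a j : Fin n) : ℕ := min (j - a).val (n - (j - a).val)

lemma sunlet_adj_step (hn : 3 ≤ n) (i : Fin n) :
    (sunlet n).Adj (i, false) (i + 1, false) := by
  rw [sunlet, fromRel_adj]
  have h1 : ((1 : Fin n) : ℕ) = 1 := by
    rw [Fin.val_one']; exact Nat.mod_eq_of_lt (by omega)
  constructor
  · intro h
    have : i = i + 1 := congrArg Prod.fst h
    have h0 : (1 : Fin n) = 0 := left_eq_add.mp this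
    have := congrArg Fin.val h0
    rw [h1] at this
    simp at this
  · left; left
    refine ⟨rfl, rfl, ?_⟩
    rw [cycleGraph_adj']
    right
    rw [add_sub_cancel_left, h1]

omit [NeZero n] in
lemma sunlet_adj_pendant (i : Fin n) : (sunlet n).Adj (i, false) (i, true) := by
  rw [sunlet, fromRel_adj]
  refine ⟨by simp, Or.inl (Or.inr ⟨rfl, rfl, rfl⟩)⟩

lemma sunlet_walkUp (hn : 3 ≤ n) (k : ℕ) (i : Fin n) :
    ∃ p : (sunlet n).Walk (i, false) (i + (k : Fin n), false), p.length = k := by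
  induction k generalizing i with
  | zero => exact ⟨Walk.nil.copy rfl (by simp), by simp⟩
  | succ k ih =>
    obtain ⟨p, hp⟩ := ih (i + 1)
    refine ⟨(Walk.cons (sunlet_adj_step n hn i) p).copy rfl (by push_cast; ring_nf),
      by simp [hp]⟩

/-- A walk from the base cycle vertex `0` to cycle vertex `j` of length ≤ `n/2`. -/
lemma sunlet_walk_cyc (hn : 3 ≤ n) (j : Fin n) :
    ∃ p : (sunlet n).Walk ((0 : Fin n), false) (j, false), p.length ≤ n / 2 := by
  by_cases ht : j.val ≤ n / 2
  · obtain ⟨p, hp⟩ := sunlet_walkUp n hn j.val 0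
    refine ⟨p.copy rfl (by simp), by simpa [hp]⟩
  · obtain ⟨p, hp⟩ := sunlet_walkUp n hn (n - j.val) j
    have he : j + ((n - j.val : ℕ) : Fin n) = 0 := by
      rw [Nat.cast_sub j.isLt.le, Fin.natCast_self, Fin.cast_val_eq_self]
      ring
    refine ⟨(p.copy rfl (by rw [he])).reverse, ?_⟩
    rw [Walk.length_reverse, Walk.length_copy, hp]
    omega

lemma sunlet_dist_ub (hn : 3 ≤ n) (v : Fin n × Bool) :
    (sunlet n).dist ((0 : Fin n), false) v ≤ n / 2 + 1 := by
  obtain ⟨j, b⟩ := v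
  obtain ⟨p, hp⟩ := sunlet_walk_cyc n hn j
  cases b with
  | false => exact le_trans (dist_le p) (by omega)
  | true =>
    have := dist_le (p.concat (sunlet_adj_pendant n j))
    rw [Walk.length_concat] at this
    omega

lemma sunlet_reach (hn : 3 ≤ n) (v : Fin n × Bool) :
    (sunlet n).Reachable ((0 : Fin n), false) v := by
  obtain ⟨j, b⟩ := v
  obtain ⟨p, -⟩ := sunlet_walk_cyc n hn j
  cases b with
  | false => exact ⟨p⟩
  | true => exact ⟨p.concat (sunlet_adj_pendant n j)⟩

lemma cd_lipschitz {a b j : Fin n} (h : (cycleGraph n).Adj a b) :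
    cd n a j ≤ cd n b j + 1 := by
  rw [cycleGraph_adj'] at h
  have hta : (j - a).val < n := (j - a).isLt
  have htb : (j - b).val < n := (j - b).isLt
  rcases h with h | h
  · have he : j - b = (j - a) + (a - b) := by ring
    have : (j - b).val = ((j - a).val + 1) % n := by
      rw [he, Fin.val_add, h]
    rcases Nat.lt_or_ge ((j - a).val + 1) n with hc | hc
    · rw [Nat.mod_eq_of_lt hc] at this
      simp only [cd]; omega
    · have hn1 : (j - a).val + 1 = n := by omega
      rw [hn1, Nat.mod_self] at this
      simp only [cd]; omega
  · have he : j - a = (j - b) + (b - a) := by ring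
    have : (j - a).val = ((j - b).val + 1) % n := by
      rw [he, Fin.val_add, h]
    rcases Nat.lt_or_ge ((j - b).val + 1) n with hc | hc
    · rw [Nat.mod_eq_of_lt hc] at this
      simp only [cd]; omega
    · have hn1 : (j - b).val + 1 = n := by omega
      rw [hn1, Nat.mod_self] at this
      simp only [cd]; omega

/-- The potential function used for the lower bound on distances to pendants. -/
noncomputable def phi (j : Fin n) (x : Fin n × Bool) : ℕ :=
  if x = (j, true) then 0 else cd n x.1 j + 1

lemma phi_lipschitz (j : Fin n) {x y : Fin n × Bool} (h : (sunlet n).Adj x y) :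
    phi n j x ≤ phi n j y + 1 := by
  rw [sunlet, fromRel_adj] at h
  obtain ⟨hne, hrel⟩ := h
  have hcyc : ∀ a b : Fin n, (cycleGraph n).Adj a b → x = (a, false) → y = (b, false) →
      phi n j x ≤ phi n j y + 1 := by
    intro a b hab hx hy
    subst hx; subst hy
    rw [phi, phi, if_neg (by simp), if_neg (by simp)]
    dsimp only
    have := cd_lipschitz n (j := j) hab
    omega
  have hpen : ∀ a : Fin n, x = (a, false) → y = (a, true) →
      phi n j x ≤ phi n j y + 1 := by
    intro a hx hy
    subst hx; subst hy
    rw [phi, phi, if_neg (by simp)]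
    by_cases ha : a = j
    · subst ha; rw [if_pos rfl]
      simp [cd]
    · rw [if_neg (by simp [ha])]
      dsimp only
      omega
  have hpen' : ∀ a : Fin n, x = (a, true) → y = (a, false) →
      phi n j x ≤ phi n j y + 1 := by
    intro a hx hy
    subst hx; subst hy
    by_cases ha : a = j
    · subst ha; rw [phi, if_pos rfl]; omega
    · rw [phi, phi, if_neg (by simp [ha]), if_neg (by simp)]
      dsimp only
      omega
  rcases hrel with (⟨h1, h2, h3⟩ | ⟨h1, h2, h3⟩) | (⟨h1, h2, h3⟩ | ⟨h1, h2, h3⟩)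
  · exact hcyc x.1 y.1 h3 (by rw [← h1]) (by rw [← h2])
  · exact hpen x.1 (by rw [← h2]) (by rw [h1, ← h3])
  · exact hcyc x.1 y.1 h3.symm (by rw [← h2]) (by rw [← h1])
  · exact hpen' x.1 (by rw [← h3]) (by rw [← h1, ← h2])

lemma phi_le_length_aux (j : Fin n) {x y : Fin n × Bool}
    (p : (sunlet n).Walk x y) (hy : y = (j, true)) : phi n j x ≤ p.length := by
  induction p with
  | nil => subst hy; rw [phi, if_pos rfl]; exact Nat.zero_le _
  | cons h q ih =>
    rw [Walk.length_cons]
    have h1 := phi_lipschitz n j h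
    have h2 := ih hy
    omega

lemma ball_card (i : Fin n) (r : ℕ) :
    (univ.filter fun j => cd n i j ≤ r).card ≤ 2 * r + 1 := by
  have h := Finset.card_le_card_of_injOn (f := fun j : Fin n => (j - i).val)
    (s := univ.filter fun j => cd n i j ≤ r)
    (t := Finset.range (r + 1) ∪ Finset.Ico (n - r) n) ?_ ?_
  · refine h.trans ?_
    refine (Finset.card_union_le _ _).trans ?_
    rw [Finset.card_range, Nat.card_Ico]
    omega
  · intro j hj
    simp only [mem_coe, mem_filter, mem_univ, true_and] at hj
    have hlt : (j - i).val < n := (j - i).isLt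
    simp only [mem_coe, Finset.mem_union, Finset.mem_range, Finset.mem_Ico]
    rw [cd] at hj
    omega
  · intro a _ b _ hab
    have : a - i = b - i := Fin.val_injective hab
    exact sub_left_injective this

/-- Every pendant is "charged" to a broadcast vertex within cyclic distance `f u - 1`. -/
lemma covered (hn : 3 ≤ n) {f : Fin n × Bool → ℕ}
    (hf : IsDominatingBroadcast (sunlet n) f) (j : Fin n) :
    ∃ u : Fin n × Bool, 1 ≤ f u ∧ cd n u.1 j ≤ f u - 1 := by
  obtain ⟨u, hu1, hud⟩ := hf (j, true)
  refine ⟨u, hu1, ?_⟩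
  by_cases hu : u = (j, true)
  · subst hu
    simp [cd]
  · have hr : (sunlet n).Reachable u (j, true) :=
      (sunlet_reach n hn u).symm.trans (sunlet_reach n hn (j, true))
    obtain ⟨p, hp⟩ := hr.exists_walk_length_eq_dist
    have := phi_le_length_aux n j p rfl
    rw [phi, if_neg hu] at this
    omega

lemma lower_bound (hn : 3 ≤ n) {f : Fin n × Bool → ℕ}
    (hf : IsDominatingBroadcast (sunlet n) f) : n + 1 ≤ 2 * ∑ v, f v := by
  classical
  choose g hg1 hg2 using covered n hn hf
  set T : Finset (Fin n × Bool) := Finset.image g univ with hT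
  have hcard : (univ : Finset (Fin n)).card =
      ∑ u ∈ T, (univ.filter fun j => g j = u).card :=
    Finset.card_eq_sum_card_image g univ
  have hfiber : ∀ u ∈ T, (univ.filter fun j => g j = u).card ≤ 2 * (f u - 1) + 1 := by
    intro u hu
    refine le_trans (Finset.card_le_card ?_) (ball_card n u.1 (f u - 1))
    intro j hj
    simp only [mem_filter, mem_univ, true_and] at hj ⊢
    rw [← hj]
    exact hg2 j
  have hfT : ∀ u ∈ T, 1 ≤ f u := by
    intro u hu
    obtain ⟨j, -, rfl⟩ := Finset.mem_image.mp hu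
    exact hg1 j
  have hTne : 1 ≤ T.card := by
    have : (0 : Fin n) ∈ (univ : Finset (Fin n)) := mem_univ _
    have : g 0 ∈ T := Finset.mem_image_of_mem g this
    exact Finset.card_pos.mpr ⟨_, this⟩
  have h1 : n + T.card ≤ ∑ u ∈ T, (2 * (f u - 1) + 1) + T.card := by
    have := Finset.sum_le_sum hfiber
    rw [← hcard] at this
    simp only [Finset.card_univ, Fintype.card_fin] at this
    omega
  have h2 : ∑ u ∈ T, (2 * (f u - 1) + 1) + T.card = ∑ u ∈ T, 2 * f u := by
    have he : ∑ u ∈ T, (2 * (f u - 1) + 1 + 1) = ∑ u ∈ T, 2 * f u :=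
      Finset.sum_congr rfl fun u hu => by have := hfT u hu; omega
    have ha : ∑ u ∈ T, (2 * (f u - 1) + 1 + 1) =
        ∑ u ∈ T, (2 * (f u - 1) + 1) + ∑ _u ∈ T, 1 := Finset.sum_add_distrib
    have hb : ∑ _u ∈ T, (1 : ℕ) = T.card := by simp
    omega
  have h3 : ∑ u ∈ T, 2 * f u ≤ ∑ u, 2 * f u :=
    Finset.sum_le_sum_of_subset (Finset.subset_univ T)
  have h4 : ∑ u, 2 * f u = 2 * ∑ v, f v := by
    rw [Finset.mul_sum]
  omega

omit [NeZero n] in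
lemma ceil_eq (hn : 3 ≤ n) : ⌈((n : ℚ) + 1) / 2⌉₊ = n / 2 + 1 := by
  rw [Nat.ceil_eq_iff (by omega)]
  have h2 : (2 : ℚ) > 0 := by norm_num
  obtain ⟨m, hm⟩ : ∃ m, m = n / 2 := ⟨n / 2, rfl⟩
  rw [← hm]
  have hmn : 2 * m ≤ n ∧ n ≤ 2 * m + 1 := by omega
  constructor
  · rw [Nat.add_sub_cancel, lt_div_iff₀ h2]
    push_cast
    have : (2 * m : ℚ) < n + 1 := by exact_mod_cast by omega
    linarith
  · rw [div_le_iff₀ h2]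
    push_cast
    have : (n : ℚ) + 1 ≤ 2 * m + 2 := by exact_mod_cast by omega
    linarith

end SunletAux

/-- For every natural number `n ≥ 3`, the broadcast domination number of the
sunlet graph `S_n` equals `⌈(n + 1) / 2⌉`. -/
theorem gammaB_sunlet (n : ℕ) (hn : 3 ≤ n) :
    gammaB (Fin n × Bool) (sunlet n) = ⌈((n : ℚ) + 1) / 2⌉₊ := by
  haveI : NeZero n := ⟨by omega⟩
  classical
  rw [SunletAux.ceil_eq n hn, gammaB]
  have hmem : (n / 2 + 1) ∈
      {c : ℕ | ∃ f : Fin n × Bool → ℕ, IsDominatingBroadcast (sunlet n) f ∧ ∑ v, f v = c} := by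
    refine ⟨fun v => if v = ((0 : Fin n), false) then n / 2 + 1 else 0, ?_, ?_⟩
    · intro v
      refine ⟨((0 : Fin n), false), ?_, ?_⟩
      · dsimp only; rw [if_pos rfl]; omega
      · dsimp only; rw [if_pos rfl]; exact SunletAux.sunlet_dist_ub n hn v
    · simp
  refine le_antisymm (Nat.sInf_le hmem) (le_csInf ⟨_, hmem⟩ ?_)
  rintro c ⟨f, hf, rfl⟩
  have := SunletAux.lower_bound n hn hf
  omega
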